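/- Let S be a semiring, n ≥ 2, and suppose M_n(S) is bi-ideal-simple. Then S is bi-ideal-free (the only bi-ideal of S is S itself). -/
import Mathlib


/-- A semiring in the sense of the paper: associative `+` and `*`, `+` commutative,
`*` distributing over `+` from both sides; no zero or unity assumed. -/
class PSemiring (S : Type) extends AddCommSemigroup S, Semigroup S where
  left_distrib : ∀ a b c : S, a * (b + c) = a * b + a * c
  right_distrib : ∀ a b c : S, (a + b) * c = a * c + b * c

section Defs
variable {T : Type} [Add T] [Mul T]

def MulAbsorbing (w : T) : Prop := ∀ a : T, a * w = w ∧ w * a = w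
def AddAbsorbing (w : T) : Prop := ∀ a : T, a + w = w
def AddNeutral (w : T) : Prop := ∀ a : T, a + w = a
def BiAbsorbing (w : T) : Prop := MulAbsorbing w ∧ AddAbsorbing w
def IsZero (w : T) : Prop := MulAbsorbing w ∧ AddNeutral w
def IsUnity (w : T) : Prop := ∀ a : T, w * a = a ∧ a * w = a

def IsBiIdeal (I : Set T) : Prop :=
  I.Nonempty ∧ ∀ a ∈ I, ∀ s : T, a + s ∈ I ∧ a * s ∈ I ∧ s * a ∈ I

def IsCongruence (r : T → T → Prop) : Prop :=
  Equivalence r ∧ (∀ a b c d : T, r a b → r c d → r (a + c) (b + d)) ∧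
    (∀ a b c d : T, r a b → r c d → r (a * c) (b * d))

/-- The standard quasiordering on a semiring. -/
def leS (a b : T) : Prop := a = b ∨ ∃ c : T, a + c = b

/-- `addPow m b` is the `(m+1)`-fold sum `b + ⋯ + b`. -/
def addPow : ℕ → T → T
  | 0, b => b
  | m + 1, b => addPow m b + b

end Defs

def CongSimple (T : Type) [Add T] [Mul T] : Prop :=
  (∃ a b : T, a ≠ b) ∧
    ∀ r : T → T → Prop, IsCongruence r →
      (∀ a b : T, r a b ↔ a = b) ∨ (∀ a b : T, r a b)

def BiIdealSimple (T : Type) [Add T] [Mul T] : Prop :=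
  (∃ a b : T, a ≠ b) ∧
    ∀ I : Set T, IsBiIdeal I → (∃ w : T, I = {w}) ∨ I = Set.univ

def BiIdealFree (T : Type) [Add T] [Mul T] : Prop :=
  (∃ a b : T, a ≠ b) ∧ ∀ I : Set T, IsBiIdeal I → I = Set.univ

/-- Sum of a nonempty family indexed by `Fin (n+1)`. -/
def finSum {S : Type} [Add S] : ∀ {n : ℕ}, (Fin (n + 1) → S) → S
  | 0, f => f 0
  | n + 1, f => finSum (fun i : Fin (n + 1) => f i.castSucc) + f (Fin.last (n + 1))

/-- `Mat n S` is the semiring of `(n+1) × (n+1)` matrices over `S`. -/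
structure Mat (n : ℕ) (S : Type) where
  entry : Fin (n + 1) → Fin (n + 1) → S

instance {n : ℕ} {S : Type} [Add S] : Add (Mat n S) :=
  ⟨fun A B => ⟨fun i j => A.entry i j + B.entry i j⟩⟩

instance {n : ℕ} {S : Type} [Add S] [Mul S] : Mul (Mat n S) :=
  ⟨fun A B => ⟨fun i j => finSum (fun k => A.entry i k * B.entry k j)⟩⟩

/-- The constant matrix `ā`. -/
def Mat.const (n : ℕ) {S : Type} (a : S) : Mat n S := ⟨fun _ _ => a⟩


lemma Mat.ext' {n : ℕ} {S : Type} {A B : Mat n S}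
    (h : ∀ i j, A.entry i j = B.entry i j) : A = B := by
  cases A; cases B
  simp only [Mat.mk.injEq]
  funext i j; exact h i j

lemma finSum_mem {S : Type} [Add S] {I : Set S}
    (hI : ∀ x ∈ I, ∀ s : S, x + s ∈ I) :
    ∀ {m : ℕ} (f : Fin (m + 1) → S), (∀ k, f k ∈ I) → finSum f ∈ I
  | 0, f, hf => hf 0
  | m + 1, f, hf =>
      hI _ (finSum_mem hI (fun i => f i.castSucc) (fun i => hf _)) _

lemma finSum_absorb {S : Type} [AddCommSemigroup S] {w : S}
    (hw : ∀ a : S, w + a = w) :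
    ∀ {m : ℕ} (f : Fin (m + 1) → S), (∃ k, f k = w) → finSum f = w := by
  intro m
  induction m with
  | zero =>
    rintro f ⟨k, hk⟩
    rw [Fin.fin_one_eq_zero k] at hk
    exact hk
  | succ m ih =>
    rintro f ⟨k, hk⟩
    by_cases hlast : k = Fin.last (m + 1)
    · show finSum (fun i : Fin (m + 1) => f i.castSucc) + f (Fin.last (m + 1)) = w
      rw [← hlast, hk, add_comm]
      exact hw _
    · obtain ⟨j, rfl⟩ := Fin.exists_castSucc_eq.2 hlast
      show finSum (fun i : Fin (m + 1) => f i.castSucc) + f (Fin.last (m + 1)) = w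
      rw [ih (fun i => f i.castSucc) ⟨j, hk⟩]
      exact hw _

/-- if `M_n(S)` is bi-ideal-simple for some `n ≥ 2` (`Mat (n+1)` has
size `n+2`), then `S` is bi-ideal-free. -/
theorem stmt13 {S : Type} [PSemiring S] (n : ℕ)
    (h : BiIdealSimple (Mat (n + 1) S)) :
    BiIdealFree S := by
  obtain ⟨⟨A, B, hAB⟩, hsimp⟩ := h
  have hex : ∃ a b : S, a ≠ b := by
    by_contra hc
    push_neg at hc
    exact hAB (Mat.ext' fun i j => hc _ _)
  refine ⟨hex, ?_⟩
  intro I hI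
  obtain ⟨⟨w0, hw0⟩, hclos⟩ := hI
  have hsum : ∀ x ∈ I, ∀ s : S, x + s ∈ I := fun x hx s => (hclos x hx s).1
  set J : Set (Mat (n + 1) S) := {M | ∀ i j, M.entry i j ∈ I} with hJdef
  have hJbi : IsBiIdeal J := by
    refine ⟨⟨Mat.const _ w0, fun i j => hw0⟩, ?_⟩
    intro A hA M
    refine ⟨fun i j => (hclos _ (hA i j) _).1, fun i j => ?_, fun i j => ?_⟩
    · exact finSum_mem hsum _ (fun k => (hclos _ (hA i k) (M.entry k j)).2.1)
    · exact finSum_mem hsum _ (fun k => (hclos _ (hA k j) (M.entry i k)).2.2)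
  rcases hsimp J hJbi with ⟨W, hW⟩ | hU
  · exfalso
    -- I = {w0}, and w0 is bi-absorbing
    have hconst : ∀ x ∈ I, Mat.const (n + 1) x = W := by
      intro x hx
      have : Mat.const (n + 1) x ∈ J := fun i j => hx
      rw [hW] at this; exact this
    have hIw : ∀ x ∈ I, x = w0 := by
      intro x hx
      have := (hconst x hx).trans (hconst w0 hw0).symm
      exact congrFun (congrFun (congrArg Mat.entry this) 0) 0
    have hadd : ∀ s : S, w0 + s = w0 := fun s =>
      hIw _ (hclos w0 hw0 s).1
    have hmulL : ∀ s : S, w0 * s = w0 := fun s =>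
      hIw _ (hclos w0 hw0 s).2.1
    have hmulR : ∀ s : S, s * w0 = w0 := fun s =>
      hIw _ (hclos w0 hw0 s).2.2
    -- the bi-ideal of matrices with (0,0)-entry w0
    set K : Set (Mat (n + 1) S) := {M | M.entry 0 0 = w0} with hKdef
    have hKbi : IsBiIdeal K := by
      refine ⟨⟨Mat.const _ w0, rfl⟩, ?_⟩
      intro A hA M
      refine ⟨?_, ?_, ?_⟩
      · show A.entry 0 0 + M.entry 0 0 = w0
        rw [hA]; exact hadd _
      · show finSum (fun k => A.entry 0 k * M.entry k 0) = w0
        exact finSum_absorb hadd _ ⟨0, by rw [hA]; exact hmulL _⟩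
      · show finSum (fun k => M.entry 0 k * A.entry k 0) = w0
        exact finSum_absorb hadd _ ⟨0, by rw [hA]; exact hmulR _⟩
    -- pick c ≠ w0
    obtain ⟨a, b, hab⟩ := hex
    obtain ⟨c, hc⟩ : ∃ c : S, c ≠ w0 := by
      by_cases ha : a = w0
      · exact ⟨b, fun hb => hab (by rw [ha, hb])⟩
      · exact ⟨a, ha⟩
    have hone : (⟨1, by omega⟩ : Fin (n + 2)) ≠ 0 := by
      intro hh
      have := congrArg Fin.val hh
      simp at this
    rcases hsimp K hKbi with ⟨W', hW'⟩ | hKU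
    · -- K would be a singleton, but it contains two distinct matrices
      set M2 : Mat (n + 1) S := ⟨fun _ j => if j = 0 then w0 else c⟩ with hM2
      have h1 : Mat.const (n + 1) w0 ∈ K := rfl
      have h2 : M2 ∈ K := by show (if (0 : Fin (n+2)) = 0 then w0 else c) = w0; simp
      rw [hW'] at h1 h2
      have : Mat.const (n + 1) w0 = M2 := h1.trans h2.symm
      have := congrFun (congrFun (congrArg Mat.entry this) 0) ⟨1, by omega⟩
      simp only [Mat.const, hM2, if_neg hone] at this
      exact hc this.symm
    · -- K = univ would force c = w0
      have : Mat.const (n + 1) c ∈ K := by rw [hKU]; trivial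
      exact hc this
  · -- J = univ, hence I = univ
    ext s
    simp only [Set.mem_univ, iff_true]
    have : Mat.const (n + 1) s ∈ J := by rw [hU]; trivial
    exact this 0 0
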